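/- Let n ≥ 2, f ∈ Aut(nK_ω), Σ ⊆ nK_ω finite. Then A_{f,Σ} = {g ∈ Aut(nK_ω) : ⟨f̄, ḡ⟩ = S_n and Σ is a set of orbit representatives of g} is nonempty if and only if there exists σ ∈ S_n with ⟨f̄, σ⟩ = S_n such that for all i ∈ {1,…,n}, the union of the components L_{(i)σ^j} over j ∈ ℤ has nonempty intersection with Σ. -/

import Mathlib

/-- nK_ω: the disjoint union of n copies of the countably infinite complete graph,
with components L_i = {i} × ℕ. -/
def nKomega (n : ℕ) : SimpleGraph (Fin n × ℕ) :=
  SimpleGraph.fromRel (fun u v => u.1 = v.1)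

lemma nKomega_adj {n : ℕ} (u v : Fin n × ℕ) :
    (nKomega n).Adj u v ↔ u ≠ v ∧ u.1 = v.1 := by
  unfold nKomega
  rw [SimpleGraph.fromRel_adj]
  constructor
  · rintro ⟨h1, h2 | h2⟩
    exacts [⟨h1, h2⟩, ⟨h1, h2.symm⟩]
  · rintro ⟨h1, h2⟩
    exact ⟨h1, Or.inl h2⟩

lemma proj_inv {n : ℕ} {h : Equiv.Perm (Fin n × ℕ)} {u : Equiv.Perm (Fin n)}
    (H : ∀ x, (h x).1 = u x.1) : ∀ x, (h⁻¹ x).1 = u⁻¹ x.1 := by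
  intro x
  have h1 := H (h⁻¹ x)
  rw [← Equiv.Perm.mul_apply, mul_inv_cancel, Equiv.Perm.one_apply] at h1
  rw [h1, ← Equiv.Perm.mul_apply, inv_mul_cancel, Equiv.Perm.one_apply]

lemma proj_zpow {n : ℕ} {h : Equiv.Perm (Fin n × ℕ)} {u : Equiv.Perm (Fin n)}
    (H : ∀ x, (h x).1 = u x.1) : ∀ (m : ℤ) (x), ((h ^ m) x).1 = (u ^ m) x.1 := by
  intro m
  induction m using Int.induction_on with
  | zero => simp
  | succ k ih =>
      intro x
      rw [zpow_add_one, zpow_add_one, Equiv.Perm.mul_apply, Equiv.Perm.mul_apply, ih, H]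
  | pred k ih =>
      intro x
      rw [zpow_sub_one, zpow_sub_one, Equiv.Perm.mul_apply, Equiv.Perm.mul_apply, ih,
        proj_inv H]

lemma exists_equiv_pinned {α ι : Type*} [Countable α] [Infinite α] [Finite ι]
    (u : ι → α) (v : ι → ℕ) (hu : Function.Injective u) (hv : Function.Injective v) :
    ∃ e : α ≃ ℕ, ∀ t, e (u t) = v t := by
  classical
  have hru : (Set.range u).Finite := Set.finite_range u
  have hrv : (Set.range v).Finite := Set.finite_range v
  have h1 : Infinite ↥(Set.range u)ᶜ := Set.infinite_coe_iff.2 hru.infinite_compl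
  have h2 : Infinite ↥(Set.range v)ᶜ := Set.infinite_coe_iff.2 hrv.infinite_compl
  obtain ⟨d1⟩ := nonempty_denumerable ↥(Set.range u)ᶜ
  obtain ⟨d2⟩ := nonempty_denumerable ↥(Set.range v)ᶜ
  have ec : ↥(Set.range u)ᶜ ≃ ↥(Set.range v)ᶜ :=
    (@Denumerable.eqv _ d1).trans (@Denumerable.eqv _ d2).symm
  refine ⟨(Equiv.Set.sumCompl (Set.range u)).symm.trans
    ((((Equiv.ofInjective u hu).symm.trans (Equiv.ofInjective v hv)).sumCongr ec).trans
      (Equiv.Set.sumCompl (Set.range v))), ?_⟩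
  intro t
  have hmem : u t ∈ Set.range u := Set.mem_range_self t
  simp only [Equiv.trans_apply, Equiv.Set.sumCompl_symm_apply_of_mem hmem, Equiv.sumCongr_apply,
    Sum.map_inl]
  have h3 : (Equiv.ofInjective u hu).symm ⟨u t, hmem⟩ = t := by
    rw [Equiv.symm_apply_eq]; rfl
  rw [h3]
  have h4 : Equiv.ofInjective v hv t = ⟨v t, Set.mem_range_self t⟩ := rfl
  rw [h4, Equiv.Set.sumCompl_apply_inl]

/-- The shift permutation on `α × ℤ`. -/
def shiftP (α : Type*) : Equiv.Perm (α × ℤ) where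
  toFun p := (p.1, p.2 + 1)
  invFun p := (p.1, p.2 - 1)
  left_inv p := by simp
  right_inv p := by simp

lemma shiftP_apply {α : Type*} (p : α × ℤ) : shiftP α p = (p.1, p.2 + 1) := rfl

lemma shiftP_inv_apply {α : Type*} (p : α × ℤ) : (shiftP α)⁻¹ p = (p.1, p.2 - 1) := rfl

lemma shiftP_zpow {α : Type*} (m : ℤ) : ∀ p : α × ℤ, ((shiftP α) ^ m) p = (p.1, p.2 + m) := by
  induction m using Int.induction_on with
  | zero => intro p; simp
  | succ k ih =>
      intro p
      rw [zpow_add_one, Equiv.Perm.mul_apply, ih, shiftP_apply]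
      exact Prod.ext_iff.2 ⟨rfl, by push_cast; ring⟩
  | pred k ih =>
      intro p
      rw [zpow_sub_one, Equiv.Perm.mul_apply, ih, shiftP_inv_apply]
      exact Prod.ext_iff.2 ⟨rfl, by push_cast; ring⟩

lemma rev_construct {n : ℕ} (σ : Equiv.Perm (Fin n)) (S : Finset (Fin n × ℕ))
    (hmeet : ∀ i : Fin n, ∃ v ∈ S, ∃ j : ℤ, v.1 = (σ ^ j) i) :
    ∃ g : Equiv.Perm (Fin n × ℕ), (∀ x, (g x).1 = σ x.1) ∧
      (∀ x, ∃! s', s' ∈ S ∧ g.SameCycle s' x) := by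
  classical
  -- fibers of the "address map" are infinite
  have hinf : ∀ i : Fin n, Infinite {p : ↥S × ℤ // (σ ^ p.2) (p.1 : Fin n × ℕ).1 = i} := by
    intro i
    obtain ⟨v, hvS, j, hvj⟩ := hmeet i
    have ho : 0 < orderOf σ := orderOf_pos σ
    have hone : σ ^ (orderOf σ : ℤ) = 1 := by
      rw [zpow_natCast, pow_orderOf_eq_one]
    have key : ∀ m : ℕ, (σ ^ ((orderOf σ : ℤ) * m - j)) v.1 = i := by
      intro m
      have h1 : ((orderOf σ : ℤ) * m - j) = (orderOf σ : ℤ) * m + (-j) := by ring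
      rw [h1, zpow_add, Equiv.Perm.mul_apply]
      have h2 : (σ ^ (-j : ℤ)) v.1 = i := by
        rw [hvj, ← Equiv.Perm.mul_apply, ← zpow_add, neg_add_cancel, zpow_zero,
          Equiv.Perm.one_apply]
      rw [h2, zpow_mul, hone, one_zpow, Equiv.Perm.one_apply]
    refine Infinite.of_injective
      (fun m : ℕ => (⟨(⟨v, hvS⟩, (orderOf σ : ℤ) * m - j), key m⟩ :
        {p : ↥S × ℤ // (σ ^ p.2) (p.1 : Fin n × ℕ).1 = i})) ?_
    intro m m' hmm
    have h5 := congrArg (fun q => ((q : {p : ↥S × ℤ // (σ ^ p.2) (p.1 : Fin n × ℕ).1 = i}) :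
      ↥S × ℤ).2) hmm
    simp only at h5
    have h6 : (orderOf σ : ℤ) * m = (orderOf σ : ℤ) * m' := by omega
    have h7 : (m : ℤ) = m' := mul_left_cancel₀ (by exact_mod_cast ho.ne') h6
    exact_mod_cast h7
  -- pinned equivalences on each fiber
  have hpin : ∀ i : Fin n, ∃ e : {p : ↥S × ℤ // (σ ^ p.2) (p.1 : Fin n × ℕ).1 = i} ≃ ℕ,
      ∀ (s : ↥S) (hs : (s : Fin n × ℕ).1 = i),
        e ⟨(s, 0), by simpa using hs⟩ = (s : Fin n × ℕ).2 := by
    intro i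
    haveI := hinf i
    obtain ⟨e, he⟩ := exists_equiv_pinned
      (fun t : {s : ↥S // (s : Fin n × ℕ).1 = i} =>
        (⟨(t.1, (0 : ℤ)), by simpa using t.2⟩ :
          {p : ↥S × ℤ // (σ ^ p.2) (p.1 : Fin n × ℕ).1 = i}))
      (fun t => (t.1 : Fin n × ℕ).2)
      (by
        intro t t' hmm
        have h2 := congrArg Subtype.val hmm
        exact Subtype.ext (congrArg Prod.fst h2))
      (by
        intro t t' hmm
        exact Subtype.ext (Subtype.ext (Prod.ext_iff.2 ⟨t.2.trans t'.2.symm, hmm⟩)))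
    exact ⟨e, fun s hs => he ⟨s, hs⟩⟩
  choose e he using hpin
  let E : (↥S × ℤ) ≃ (Fin n × ℕ) :=
    (Equiv.sigmaFiberEquiv (fun p : ↥S × ℤ => (σ ^ p.2) (p.1 : Fin n × ℕ).1)).symm.trans
      ((Equiv.sigmaCongrRight e).trans (Equiv.sigmaEquivProd (Fin n) ℕ))
  have hK1 : ∀ p : ↥S × ℤ, (E p).1 = (σ ^ p.2) (p.1 : Fin n × ℕ).1 := fun p => rfl
  have hK2 : ∀ s : ↥S, E.symm (s : Fin n × ℕ) = (s, (0 : ℤ)) := by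
    intro s
    have h1 : E.symm (s : Fin n × ℕ) =
        (((e (s : Fin n × ℕ).1).symm (s : Fin n × ℕ).2 :
          {p : ↥S × ℤ // (σ ^ p.2) (p.1 : Fin n × ℕ).1 = (s : Fin n × ℕ).1}) : ↥S × ℤ) := rfl
    have h2 : (e (s : Fin n × ℕ).1).symm (s : Fin n × ℕ).2 = ⟨(s, 0), by simp⟩ := by
      rw [Equiv.symm_apply_eq]
      exact (he (s : Fin n × ℕ).1 s rfl).symm
    rw [h1, h2]
  -- the permutation
  set g : Equiv.Perm (Fin n × ℕ) := E.permCongr (shiftP ↥S) with hg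
  have hmul : ∀ a b : Equiv.Perm (↥S × ℤ),
      E.permCongr (a * b) = E.permCongr a * E.permCongr b := by
    intro a b
    ext x : 1
    rw [Equiv.permCongr_apply, Equiv.Perm.mul_apply, Equiv.Perm.mul_apply,
      Equiv.permCongr_apply, Equiv.permCongr_apply, Equiv.symm_apply_apply]
  have hMz : ∀ m : ℤ, g ^ m = E.permCongr ((shiftP ↥S) ^ m) := by
    intro m
    let M : Equiv.Perm (↥S × ℤ) →* Equiv.Perm (Fin n × ℕ) :=
      MonoidHom.mk' (fun p => E.permCongr p) hmul
    exact (map_zpow M (shiftP ↥S) m).symm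
  have hsc : ∀ x y : Fin n × ℕ, g.SameCycle x y ↔ (E.symm x).1 = (E.symm y).1 := by
    intro x y
    constructor
    · rintro ⟨m, hm⟩
      rw [hMz, Equiv.permCongr_apply] at hm
      have h3 : ((shiftP ↥S) ^ m) (E.symm x) = E.symm y := by
        rw [← hm, Equiv.symm_apply_apply]
      rw [shiftP_zpow] at h3
      have h4 := congrArg Prod.fst h3
      exact h4
    · intro h1
      refine ⟨(E.symm y).2 - (E.symm x).2, ?_⟩
      rw [hMz, Equiv.permCongr_apply, shiftP_zpow]
      have h4 : ((E.symm x).1, (E.symm x).2 + ((E.symm y).2 - (E.symm x).2)) = E.symm y :=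
        Prod.ext_iff.2 ⟨h1, by ring⟩
      rw [h4, Equiv.apply_symm_apply]
  refine ⟨g, ?_, ?_⟩
  · intro x
    rw [hg, Equiv.permCongr_apply, hK1, shiftP_apply]
    show (σ ^ ((E.symm x).2 + 1)) ((E.symm x).1 : Fin n × ℕ).1 = σ x.1
    rw [show (E.symm x).2 + 1 = 1 + (E.symm x).2 by ring, zpow_add, zpow_one,
      Equiv.Perm.mul_apply]
    have h5 : (σ ^ (E.symm x).2) ((E.symm x).1 : Fin n × ℕ).1 = x.1 :=
      (hK1 (E.symm x)).symm.trans (congrArg Prod.fst (E.apply_symm_apply x))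
    rw [h5]
  · intro x
    refine ⟨((E.symm x).1 : Fin n × ℕ), ⟨(E.symm x).1.2, ?_⟩, ?_⟩
    · rw [hsc, hK2]
    · rintro y ⟨hyS, hy⟩
      rw [hsc, hK2 ⟨y, hyS⟩] at hy
      have : (⟨y, hyS⟩ : ↥S) = (E.symm x).1 := hy
      exact congrArg Subtype.val this

/-- Let n ≥ 2, f ∈ Aut(nK_ω) with induced permutation f̄ of the
components, and Σ finite.  Then A_{f,Σ} = {g ∈ Aut(nK_ω) : ⟨f̄, ḡ⟩ = S_n and Σ is a
set of orbit representatives of g} is nonempty if and only if there is σ ∈ S_n with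
⟨f̄, σ⟩ = S_n such that for every i, the union ⋃_{j ∈ ℤ} L_{(i)σ^j} meets Σ. -/
theorem stmt_15 (n : ℕ) (hn : 2 ≤ n) (f : nKomega n ≃g nKomega n)
    (fbar : Equiv.Perm (Fin n)) (hfbar : ∀ x : Fin n × ℕ, (f x).1 = fbar x.1)
    (S : Finset (Fin n × ℕ)) :
    (∃ g : nKomega n ≃g nKomega n,
        (∀ τ : Equiv.Perm (Fin n),
          ∃ h ∈ Subgroup.closure ({f.toEquiv, g.toEquiv} : Set (Equiv.Perm (Fin n × ℕ))),
            ∀ x : Fin n × ℕ, (h x).1 = τ x.1) ∧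
        (∀ x, ∃! σ', σ' ∈ S ∧ Equiv.Perm.SameCycle g.toEquiv σ' x)) ↔
      ∃ σ : Equiv.Perm (Fin n),
        Subgroup.closure ({fbar, σ} : Set (Equiv.Perm (Fin n))) = ⊤ ∧
        ∀ i : Fin n, ∃ v ∈ S, ∃ j : ℤ, v.1 = (σ ^ j) i := by
  classical
  constructor
  · rintro ⟨g, hg1, hg2⟩
    -- the induced permutation of the components
    have hb0 : ∀ i a, (g.toEquiv (i, a)).1 = (g.toEquiv (i, 0)).1 := by
      intro i a
      by_cases ha : a = 0
      · rw [ha]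
      · have hadj : (nKomega n).Adj (i, a) (i, 0) :=
          (nKomega_adj _ _).2 ⟨fun hcon => ha (congrArg Prod.snd hcon), rfl⟩
        have h2 : (nKomega n).Adj (g.toEquiv (i, a)) (g.toEquiv (i, 0)) :=
          g.map_rel_iff.2 hadj
        exact ((nKomega_adj _ _).1 h2).2
    have hbinj : Function.Injective (fun i : Fin n => (g.toEquiv (i, 0)).1) := by
      intro i i' hii
      by_contra hne
      have hne2 : ((i : Fin n), (0 : ℕ)) ≠ (i', 0) := fun hcon => hne (congrArg Prod.fst hcon)
      have hne3 : g.toEquiv (i, 0) ≠ g.toEquiv (i', 0) := fun hcon => hne2 (g.toEquiv.injective hcon)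
      have hadj : (nKomega n).Adj (g.toEquiv (i, 0)) (g.toEquiv (i', 0)) :=
        (nKomega_adj _ _).2 ⟨hne3, hii⟩
      have h4 := (nKomega_adj _ _).1 (g.map_rel_iff.1 hadj)
      exact hne h4.2
    set gb : Equiv.Perm (Fin n) :=
      Equiv.ofBijective _ (Finite.injective_iff_bijective.1 hbinj) with hgbdef
    have hgb : ∀ x : Fin n × ℕ, (g.toEquiv x).1 = gb x.1 := by
      rintro ⟨i, a⟩
      have : gb i = (g.toEquiv (i, 0)).1 := rfl
      rw [this]
      exact hb0 i a
    refine ⟨gb, ?_, ?_⟩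
    · rw [eq_top_iff]
      intro τ _
      obtain ⟨h, hmem, hproj⟩ := hg1 τ
      have hind : ∃ u ∈ Subgroup.closure ({fbar, gb} : Set (Equiv.Perm (Fin n))),
          ∀ x : Fin n × ℕ, (h x).1 = u x.1 := by
        refine Subgroup.closure_induction ?_ ?_ ?_ ?_ hmem
        · intro y hy
          rcases hy with hy | hy
          · refine ⟨fbar, Subgroup.subset_closure (Set.mem_insert _ _), ?_⟩
            rw [hy]
            exact hfbar
          · simp only [Set.mem_singleton_iff] at hy
            refine ⟨gb, Subgroup.subset_closure (Set.mem_insert_of_mem _ rfl), ?_⟩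
            rw [hy]
            exact hgb
        · exact ⟨1, Subgroup.one_mem _, fun x => rfl⟩
        · rintro y z _ _ ⟨u1, hu1, hp1⟩ ⟨u2, hu2, hp2⟩
          exact ⟨u1 * u2, Subgroup.mul_mem _ hu1 hu2, fun x => by
            rw [Equiv.Perm.mul_apply, Equiv.Perm.mul_apply, hp1, hp2]⟩
        · rintro y _ ⟨u, hu, hp⟩
          exact ⟨u⁻¹, Subgroup.inv_mem _ hu, proj_inv hp⟩
      obtain ⟨u, humem, hup⟩ := hind
      have hτu : τ = u := by
        apply Equiv.ext
        intro i
        have e1 := hproj (i, 0)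
        have e2 := hup (i, 0)
        exact e1.symm.trans e2
      rw [hτu]
      exact humem
    · intro i
      obtain ⟨v, ⟨hvS, m, hm⟩, -⟩ := hg2 (i, 0)
      have hpp := proj_zpow hgb m v
      rw [hm] at hpp
      refine ⟨v, hvS, -m, ?_⟩
      have hpp' : (gb ^ m) v.1 = i := hpp.symm
      rw [← hpp', ← Equiv.Perm.mul_apply, ← zpow_add, neg_add_cancel, zpow_zero,
        Equiv.Perm.one_apply]
  · rintro ⟨σ, hσtop, hmeet⟩
    obtain ⟨g0, hg0a, hg0b⟩ := rev_construct σ S hmeet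
    have hmrl : ∀ {a b : Fin n × ℕ}, (nKomega n).Adj (g0 a) (g0 b) ↔ (nKomega n).Adj a b := by
      intro a b
      rw [nKomega_adj, nKomega_adj, hg0a, hg0a]
      constructor
      · rintro ⟨h1, h2⟩
        exact ⟨fun hcon => h1 (congrArg g0 hcon), σ.injective h2⟩
      · rintro ⟨h1, h2⟩
        exact ⟨fun hcon => h1 (g0.injective hcon), congrArg σ h2⟩
    refine ⟨⟨g0, hmrl⟩, ?_, ?_⟩
    · intro τ
      have hτ : τ ∈ Subgroup.closure ({fbar, σ} : Set (Equiv.Perm (Fin n))) := by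
        rw [hσtop]; exact Subgroup.mem_top τ
      refine Subgroup.closure_induction ?_ ?_ ?_ ?_ hτ
      · intro y hy
        rcases hy with hy | hy
        · refine ⟨f.toEquiv, Subgroup.subset_closure (Set.mem_insert _ _), ?_⟩
          rw [hy]
          exact hfbar
        · simp only [Set.mem_singleton_iff] at hy
          refine ⟨g0, Subgroup.subset_closure (Set.mem_insert_of_mem _ rfl), ?_⟩
          rw [hy]
          exact hg0a
      · exact ⟨1, Subgroup.one_mem _, fun x => rfl⟩
      · rintro y z _ _ ⟨u1, hu1, hp1⟩ ⟨u2, hu2, hp2⟩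
        exact ⟨u1 * u2, Subgroup.mul_mem _ hu1 hu2, fun x => by
          rw [Equiv.Perm.mul_apply, Equiv.Perm.mul_apply, hp1, hp2]⟩
      · rintro y _ ⟨u, hu, hp⟩
        exact ⟨u⁻¹, Subgroup.inv_mem _ hu, proj_inv hp⟩
    · exact hg0b
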